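/- Fix v ∈ (−π,0) ∪ (0,π). Then the function u ↦ Re(i·Li₂(−e^{u+iv})) = −Im Li₂(−e^{u+iv}) is differentiable on ℝ with derivative Arg(1 + e^{u+iv}), and for every u ∈ ℝ one has Re(i·Li₂(−e^{u+iv})) = −D(−e^{u+iv}) + u·Arg(1 + e^{u+iv}). -/

import Mathlib

open Real Filter MeasureTheory Topology

/-- The dilogarithm `Li₂(z) = -∫₀¹ Log(1 - z t) / t dt`. -/
noncomputable def Li2 (z : ℂ) : ℂ :=
  -∫ t in (0:ℝ)..(1:ℝ), Complex.log (1 - z * (t : ℂ)) / (t : ℂ)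

/-- The Bloch–Wigner function `D(z) = Im Li₂(z) + Arg(1-z) log|z|`. -/
noncomputable def BlochWigner (z : ℂ) : ℝ :=
  (Li2 z).im + (1 - z).arg * Real.log ‖z‖

lemma stmt3_slit (v : ℝ) (hs : Real.sin v ≠ 0) (u t : ℝ) :
    (1 + Complex.exp ((u:ℂ) + (v:ℂ)*Complex.I) * (t:ℂ)) ∈ Complex.slitPlane := by
  rcases eq_or_ne t 0 with rfl | ht
  · simp [Complex.mem_slitPlane_iff]
  · rw [Complex.mem_slitPlane_iff]
    right
    have : (1 + Complex.exp ((u:ℂ) + (v:ℂ)*Complex.I) * (t:ℂ)).im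
        = Real.exp u * Real.sin v * t := by simp [Complex.exp_im, Complex.exp_re]
    rw [this]
    exact mul_ne_zero (mul_ne_zero (Real.exp_ne_zero u) hs) ht

lemma stmt3_absge (v : ℝ) (u t : ℝ) :
    |Real.sin v| ≤ ‖(1 + Complex.exp ((u:ℂ) + (v:ℂ)*Complex.I) * (t:ℂ))‖ := by
  have hre : (1 + Complex.exp ((u:ℂ) + (v:ℂ)*Complex.I) * (t:ℂ)).re
      = 1 + Real.exp u * Real.cos v * t := by simp [Complex.exp_im, Complex.exp_re]
  have him : (1 + Complex.exp ((u:ℂ) + (v:ℂ)*Complex.I) * (t:ℂ)).im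
      = Real.exp u * Real.sin v * t := by simp [Complex.exp_im, Complex.exp_re]
  rw [Complex.norm_def, Complex.normSq_apply, hre, him, ← Real.sqrt_sq_eq_abs]
  apply Real.sqrt_le_sqrt
  nlinarith [Real.sin_sq_add_cos_sq v, sq_nonneg (Real.exp u * t + Real.cos v)]

lemma stmt3_ne (v : ℝ) (hs : Real.sin v ≠ 0) (u t : ℝ) :
    (1 + Complex.exp ((u:ℂ) + (v:ℂ)*Complex.I) * (t:ℂ)) ≠ 0 :=
  Complex.slitPlane_ne_zero (stmt3_slit v hs u t)

/-- derivative in `u` (for fixed `t ≠ 0`) of `F u t = log(1 + E u * t)/t` -/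
lemma stmt3_derivu (v : ℝ) (hs : Real.sin v ≠ 0) (t : ℝ) (ht : t ≠ 0) (u : ℝ) :
    HasDerivAt (fun x : ℝ =>
        Complex.log (1 + Complex.exp ((x:ℂ) + (v:ℂ)*Complex.I) * (t:ℂ)) / (t:ℂ))
      (Complex.exp ((u:ℂ) + (v:ℂ)*Complex.I)
        / (1 + Complex.exp ((u:ℂ) + (v:ℂ)*Complex.I) * (t:ℂ))) u := by
  have hE : HasDerivAt (fun x : ℝ => Complex.exp ((x:ℂ) + (v:ℂ)*Complex.I))
      (Complex.exp ((u:ℂ) + (v:ℂ)*Complex.I)) u := by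
    have h1 : HasDerivAt (fun z : ℂ => Complex.exp (z + (v:ℂ)*Complex.I))
        (Complex.exp ((u:ℂ) + (v:ℂ)*Complex.I)) (u:ℂ) := by
      simpa [Function.comp_def] using (Complex.hasDerivAt_exp ((u:ℂ) + (v:ℂ)*Complex.I)).comp (u:ℂ)
        ((hasDerivAt_id ((u:ℂ))).add_const ((v:ℂ)*Complex.I))
    exact h1.comp_ofReal
  have h2 := ((hE.mul_const (t:ℂ)).const_add 1).clog_real (stmt3_slit v hs u t)
  have h3 := h2.div_const (t:ℂ)
  refine h3.congr_deriv ?_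
  have hne := stmt3_ne v hs u t
  have htc : (t:ℂ) ≠ 0 := Complex.ofReal_ne_zero.mpr ht
  field_simp

/-- derivative in `t` of `φ t = log(1 + E u * t)` -/
lemma stmt3_derivt (v : ℝ) (hs : Real.sin v ≠ 0) (u t : ℝ) :
    HasDerivAt (fun s : ℝ => Complex.log (1 + Complex.exp ((u:ℂ) + (v:ℂ)*Complex.I) * (s:ℂ)))
      (Complex.exp ((u:ℂ) + (v:ℂ)*Complex.I)
        / (1 + Complex.exp ((u:ℂ) + (v:ℂ)*Complex.I) * (t:ℂ))) t := by
  have h1 : HasDerivAt (fun s : ℝ => 1 + Complex.exp ((u:ℂ) + (v:ℂ)*Complex.I) * (s:ℂ))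
      (Complex.exp ((u:ℂ) + (v:ℂ)*Complex.I)) t := by
    have h0 : HasDerivAt (fun s : ℝ => (s:ℂ)) 1 t := Complex.ofRealCLM.hasDerivAt
    simpa using (h0.const_mul (Complex.exp ((u:ℂ) + (v:ℂ)*Complex.I))).const_add 1
  simpa using h1.clog_real (stmt3_slit v hs u t)

lemma stmt3_contphi (v : ℝ) (hs : Real.sin v ≠ 0) (u : ℝ) :
    Continuous (fun t : ℝ => Complex.log (1 + Complex.exp ((u:ℂ) + (v:ℂ)*Complex.I) * (t:ℂ))) := by
  rw [continuous_iff_continuousAt]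
  exact fun t => (stmt3_derivt v hs u t).continuousAt

lemma stmt3_contpsi (v : ℝ) (hs : Real.sin v ≠ 0) (u : ℝ) :
    Continuous (fun t : ℝ => Complex.exp ((u:ℂ) + (v:ℂ)*Complex.I)
      / (1 + Complex.exp ((u:ℂ) + (v:ℂ)*Complex.I) * (t:ℂ))) := by
  apply continuous_const.div
  · exact continuous_const.add (continuous_const.mul Complex.continuous_ofReal)
  · exact fun t => stmt3_ne v hs u t

/-- FTC computation of `∫₀¹ E/(1+Et) dt`. -/
lemma stmt3_ftc (v : ℝ) (hs : Real.sin v ≠ 0) (u : ℝ) :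
    (∫ t in (0:ℝ)..(1:ℝ), Complex.exp ((u:ℂ) + (v:ℂ)*Complex.I)
        / (1 + Complex.exp ((u:ℂ) + (v:ℂ)*Complex.I) * (t:ℂ)))
      = Complex.log (1 + Complex.exp ((u:ℂ) + (v:ℂ)*Complex.I)) := by
  have := intervalIntegral.integral_eq_sub_of_hasDerivAt
    (f := fun s : ℝ => Complex.log (1 + Complex.exp ((u:ℂ) + (v:ℂ)*Complex.I) * (s:ℂ)))
    (fun t _ => stmt3_derivt v hs u t)
    ((stmt3_contpsi v hs u).intervalIntegrable 0 1)
  simpa using this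

/-- the continuous extension of `t ↦ log(1+Et)/t` by `E` at `0` -/
noncomputable def stmt3_g (v u : ℝ) : ℝ → ℂ := fun t =>
  if t = 0 then Complex.exp ((u:ℂ) + (v:ℂ)*Complex.I)
  else Complex.log (1 + Complex.exp ((u:ℂ) + (v:ℂ)*Complex.I) * (t:ℂ)) / (t:ℂ)

lemma stmt3_contg (v : ℝ) (hs : Real.sin v ≠ 0) (u : ℝ) : Continuous (stmt3_g v u) := by
  set E : ℂ := Complex.exp ((u:ℂ) + (v:ℂ)*Complex.I) with hEdef
  rw [continuous_iff_continuousAt]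
  intro t
  rcases eq_or_ne t 0 with rfl | ht
  · have hd : HasDerivAt
        (fun s : ℝ => Complex.log (1 + E * (s:ℂ))) E 0 := by
      simpa using stmt3_derivt v hs u 0
    rw [hasDerivAt_iff_tendsto_slope] at hd
    have hslope : Tendsto (stmt3_g v u) (𝓝[≠] (0:ℝ)) (𝓝 E) := by
      apply hd.congr'
      filter_upwards [self_mem_nhdsWithin] with s hs0
      have hs0' : (s:ℝ) ≠ 0 := hs0
      simp only [slope, stmt3_g, hs0', if_false, ← hEdef, vsub_eq_sub, sub_zero,
        Complex.ofReal_zero, mul_zero, add_zero, Complex.log_one]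
      simp [div_eq_inv_mul, Complex.real_smul, Complex.ofReal_inv]
    have hg0 : stmt3_g v u 0 = E := by simp [stmt3_g, hEdef]
    have hpure : Tendsto (stmt3_g v u) (pure (0:ℝ)) (𝓝 E) := by
      simpa [hg0] using tendsto_pure_nhds (stmt3_g v u) 0
    have htd : Tendsto (stmt3_g v u) (𝓝 (0:ℝ)) (𝓝 E) := by
      rw [← nhdsNE_sup_pure (0:ℝ), tendsto_sup]
      exact ⟨hslope, hpure⟩
    rwa [ContinuousAt, hg0]
  · have hc : ContinuousAt (fun s : ℝ => Complex.log (1 + E * (s:ℂ)) / (s:ℂ)) t :=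
      ((stmt3_contphi v hs u).continuousAt).div Complex.continuous_ofReal.continuousAt
        (Complex.ofReal_ne_zero.mpr ht)
    apply hc.congr
    filter_upwards [eventually_ne_nhds ht] with s hs0
    simp [stmt3_g, hs0, hEdef]

theorem stmt_3 (v : ℝ) (hv : v ∈ Set.Ioo (-π) 0 ∪ Set.Ioo 0 π) :
    (∀ u : ℝ,
      HasDerivAt (fun u : ℝ => (Complex.I * Li2 (-Complex.exp ((u : ℂ) + (v : ℂ) * Complex.I))).re)
        ((1 + Complex.exp ((u : ℂ) + (v : ℂ) * Complex.I)).arg) u) ∧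
    (∀ u : ℝ,
      (Complex.I * Li2 (-Complex.exp ((u : ℂ) + (v : ℂ) * Complex.I))).re
        = -BlochWigner (-Complex.exp ((u : ℂ) + (v : ℂ) * Complex.I))
          + u * (1 + Complex.exp ((u : ℂ) + (v : ℂ) * Complex.I)).arg) := by
  have hs : Real.sin v ≠ 0 := by
    rcases hv with h | h
    · exact ne_of_lt (Real.sin_neg_of_neg_of_neg_pi_lt h.2 h.1)
    · exact ne_of_gt (Real.sin_pos_of_pos_of_lt_pi h.1 h.2)
  have hLi2eq : ∀ u : ℝ, Li2 (-Complex.exp ((u:ℂ) + (v:ℂ)*Complex.I))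
      = -∫ t in (0:ℝ)..(1:ℝ),
          Complex.log (1 + Complex.exp ((u:ℂ) + (v:ℂ)*Complex.I) * (t:ℂ)) / (t:ℂ) := by
    intro u
    simp only [Li2, neg_mul, sub_neg_eq_add]
  constructor
  · -- derivative statement
    intro u₀
    set E : ℝ → ℂ := fun x => Complex.exp ((x:ℂ) + (v:ℂ)*Complex.I) with hEdef
    -- differentiation under the integral sign
    have key : HasDerivAt
        (fun x : ℝ => ∫ t in (0:ℝ)..(1:ℝ), Complex.log (1 + E x * (t:ℂ)) / (t:ℂ))
        (Complex.log (1 + E u₀)) u₀ := by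
      have main := intervalIntegral.hasDerivAt_integral_of_dominated_loc_of_deriv_le
        (μ := MeasureTheory.volume)
        (F := fun x t => Complex.log (1 + E x * (t:ℂ)) / (t:ℂ))
        (F' := fun x t => E x / (1 + E x * (t:ℂ)))
        (x₀ := u₀) (a := (0:ℝ)) (b := 1) (s := Metric.ball u₀ 1)
        (bound := fun _ => Real.exp (u₀ + 1) / |Real.sin v|)
        (Metric.ball_mem_nhds u₀ one_pos)
        ?hFmeas ?hFint ?hF'meas ?hbound ?hboundint ?hdiff
      · rw [stmt3_ftc v hs u₀] at main
        exact main.2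
      case hFmeas =>
        filter_upwards with x
        apply Measurable.aestronglyMeasurable
        exact ((stmt3_contphi v hs x).measurable).div Complex.measurable_ofReal
      case hFint =>
        have hgint := (stmt3_contg v hs u₀).intervalIntegrable (μ := MeasureTheory.volume) 0 1
        rw [intervalIntegrable_iff] at hgint ⊢
        apply hgint.congr
        apply (MeasureTheory.ae_restrict_iff' measurableSet_uIoc).mpr
        filter_upwards with t ht
        have ht0 : t ≠ 0 := by
          rw [Set.uIoc_of_le zero_le_one] at ht
          exact ne_of_gt ht.1
        simp [stmt3_g, ht0, hEdef]
      case hF'meas =>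
        exact ((stmt3_contpsi v hs u₀).aestronglyMeasurable).restrict
      case hbound =>
        filter_upwards with t ht x hx
        have h1 : ‖E x‖ = Real.exp x := by simp [hEdef, Complex.norm_exp]
        rw [norm_div, h1]
        apply div_le_div₀ (Real.exp_pos _).le
        · apply Real.exp_le_exp.mpr
          have := abs_lt.mp (by simpa [Real.dist_eq] using Metric.mem_ball.mp hx)
          linarith [this.2]
        · exact abs_pos.mpr hs
        · exact stmt3_absge v x t
      case hboundint =>
        exact intervalIntegrable_const
      case hdiff =>
        filter_upwards with t ht x hx
        have ht0 : t ≠ 0 := by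
          rw [Set.uIoc_of_le zero_le_one] at ht
          exact ne_of_gt ht.1
        exact stmt3_derivu v hs t ht0 x
    have h5 : HasDerivAt (fun x : ℝ => Li2 (-Complex.exp ((x:ℂ) + (v:ℂ)*Complex.I)))
        (-(Complex.log (1 + E u₀))) u₀ := by
      have heq : (fun x : ℝ => Li2 (-Complex.exp ((x:ℂ) + (v:ℂ)*Complex.I)))
          = fun x : ℝ => -(∫ t in (0:ℝ)..(1:ℝ), Complex.log (1 + E x * (t:ℂ)) / (t:ℂ)) :=
        funext fun x => hLi2eq x
      rw [heq]
      exact key.neg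
    have h6 := h5.const_mul Complex.I
    have h7 := Complex.reCLM.hasFDerivAt.comp_hasDerivAt u₀ h6
    refine h7.congr_deriv ?_
    simp [Complex.mul_re, Complex.log_im, hEdef]
  · -- algebraic identity
    intro u
    set E : ℂ := Complex.exp ((u:ℂ) + (v:ℂ)*Complex.I) with hEdef
    have h1 : (Complex.I * Li2 (-E)).re = -(Li2 (-E)).im := by
      simp [Complex.mul_re]
    have h2 : ‖-E‖ = Real.exp u := by
      simp [hEdef, Complex.norm_exp]
    have h3 : (1 : ℂ) - (-E) = 1 + E := by ring
    rw [h1, BlochWigner, h2, h3, Real.log_exp]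
    ring
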